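/- arXiv:2603.04172 — 4 statements merged into one kernel-verified Lean document; each statement's English description precedes it below -/
import Mathlib

section
/- Let L : ℝ^p × ℝ^k → ℝ be a loss in parameters (β, τ) that admits a second-order Taylor expansion at the point (0, τ̂), i.e. L(β, τ̂ + u) = L(0, τ̂) + ⟨β, ∇_β L(0, τ̂)⟩ + (1/2)(β,u)ᵀ H (β,u) + o(‖(β,u)‖²) as (β,u) → 0, where ∇_τ L(0, τ̂) = 0 and the τ–τ block H_ττ of the Hessian H is positive definite. Let C be a first-order ℓ1-equivalent complexity penalty. If λ > ‖∇_β L(0, τ̂)‖_∞, then (0, τ̂) is a local minimizer of (β, τ) ↦ L(β, τ) + λ C(β). -/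
open Asymptotics Filter



private lemma aux_scale {p k : ℕ}
    (Q : ((Fin p → ℝ) × (Fin k → ℝ)) →ₗ[ℝ] ((Fin p → ℝ) × (Fin k → ℝ)) →ₗ[ℝ] ℝ)
    (a : ℝ) (u : Fin k → ℝ) :
    Q (0, a • u) (0, a • u) = a ^ 2 * Q (0, u) (0, u) := by
  have h : ((0, a • u) : (Fin p → ℝ) × (Fin k → ℝ)) = a • ((0 : Fin p → ℝ), u) := by
    ext <;> simp
  rw [h, map_smul Q, LinearMap.smul_apply, LinearMap.map_smul, smul_eq_mul, smul_eq_mul]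
  ring

private lemma aux_posdef {p k : ℕ}
    (Q : ((Fin p → ℝ) × (Fin k → ℝ)) →ₗ[ℝ] ((Fin p → ℝ) × (Fin k → ℝ)) →ₗ[ℝ] ℝ)
    (hQpos : ∀ u : Fin k → ℝ, u ≠ 0 → 0 < Q (0, u) (0, u)) :
    ∃ c > 0, ∀ u : Fin k → ℝ, c * ‖u‖ ^ 2 ≤ Q (0, u) (0, u) := by
  rcases Nat.eq_zero_or_pos k with hk | hk
  · subst hk
    refine ⟨1, one_pos, fun u => ?_⟩
    have hu : u = 0 := Subsingleton.elim u 0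
    subst hu
    rw [Prod.mk_zero_zero, map_zero, norm_zero]
    norm_num
  · haveI : Nonempty (Fin k) := ⟨⟨0, hk⟩⟩
    -- continuity of the quadratic form on the τ block
    let Q1 := (LinearMap.toContinuousLinearMap :
        (((Fin p → ℝ) × (Fin k → ℝ)) →ₗ[ℝ] ℝ) ≃ₗ[ℝ]
          (((Fin p → ℝ) × (Fin k → ℝ)) →L[ℝ] ℝ)).toLinearMap.comp Q
    let Qc := LinearMap.toContinuousLinearMap Q1
    have hQc : ∀ v w, Qc v w = Q v w := by
      intro v w; simp [Qc, Q1]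
    have h0 : Continuous fun u : Fin k → ℝ =>
        (((0 : Fin p → ℝ), u) : (Fin p → ℝ) × (Fin k → ℝ)) :=
      continuous_const.prodMk continuous_id
    have hφcont : Continuous fun u : Fin k → ℝ => Q (0, u) (0, u) := by
      have : Continuous fun u : Fin k → ℝ => Qc (0, u) (0, u) :=
        isBoundedBilinearMap_apply.continuous.comp
          (((Qc.continuous.comp h0)).prodMk h0)
      simpa only [hQc] using this
    obtain ⟨u₀, hu₀mem, hmin⟩ :=
      (isCompact_sphere (0 : Fin k → ℝ) 1).exists_isMinOn
        (NormedSpace.sphere_nonempty.mpr zero_le_one) hφcont.continuousOn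
    have hu₀norm : ‖u₀‖ = 1 := by simpa using hu₀mem
    have hu₀ne : u₀ ≠ 0 := by
      intro h; rw [h] at hu₀norm; simp at hu₀norm
    refine ⟨Q (0, u₀) (0, u₀), hQpos u₀ hu₀ne, fun u => ?_⟩
    rcases eq_or_ne u 0 with rfl | hu
    · rw [Prod.mk_zero_zero, map_zero, norm_zero]
      norm_num
    · have hnu : (0:ℝ) < ‖u‖ := norm_pos_iff.mpr hu
      set w : Fin k → ℝ := ‖u‖⁻¹ • u with hw
      have hwnorm : ‖w‖ = 1 := norm_smul_inv_norm hu
      have hwmem : w ∈ Metric.sphere (0 : Fin k → ℝ) 1 := by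
        simpa using hwnorm
      have hle : Q (0, u₀) (0, u₀) ≤ Q (0, w) (0, w) := hmin hwmem
      have huw : u = ‖u‖ • w := by
        rw [hw, smul_smul, mul_inv_cancel₀ hnu.ne', one_smul]
      have hQw : Q (0, w) (0, w) = ‖u‖⁻¹ ^ 2 * Q (0, u) (0, u) := by
        rw [hw]; exact aux_scale Q _ u
      have h2 := mul_le_mul_of_nonneg_right hle (sq_nonneg ‖u‖)
      rw [hQw] at h2
      have he : ‖u‖⁻¹ ^ 2 * Q (0, u) (0, u) * ‖u‖ ^ 2 = Q (0, u) (0, u) := by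
        field_simp
      linarith

private lemma aux_bound {p k : ℕ}
    (Q : ((Fin p → ℝ) × (Fin k → ℝ)) →ₗ[ℝ] ((Fin p → ℝ) × (Fin k → ℝ)) →ₗ[ℝ] ℝ) :
    ∃ M ≥ (0:ℝ), ∀ v w, |Q v w| ≤ M * (‖v‖ * ‖w‖) := by
  let Q1 := (LinearMap.toContinuousLinearMap :
      (((Fin p → ℝ) × (Fin k → ℝ)) →ₗ[ℝ] ℝ) ≃ₗ[ℝ]
        (((Fin p → ℝ) × (Fin k → ℝ)) →L[ℝ] ℝ)).toLinearMap.comp Q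
  let Qc := LinearMap.toContinuousLinearMap Q1
  have hQc : ∀ v w, Qc v w = Q v w := by intro v w; simp [Qc, Q1]
  refine ⟨‖Qc‖, ge_iff_le.mpr (norm_nonneg Qc), fun v w => ?_⟩
  rw [← hQc, ← Real.norm_eq_abs]
  calc ‖Qc v w‖ ≤ ‖Qc v‖ * ‖w‖ := (Qc v).le_opNorm w
    _ ≤ ‖Qc‖ * ‖v‖ * ‖w‖ :=
        mul_le_mul_of_nonneg_right (Qc.le_opNorm v) (norm_nonneg w)
    _ = ‖Qc‖ * (‖v‖ * ‖w‖) := by ring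

set_option maxHeartbeats 1000000 in
/-- If the loss `L(β, τ)` admits a second-order Taylor expansion at
`(0, τ̂)` with no linear term in `τ` (i.e. `∇_τ L(0, τ̂) = 0`), gradient `gβ` in `β`,
Hessian (bilinear form) `Q` whose `τ–τ` block is positive definite, and `C` is a
first-order ℓ1-equivalent complexity penalty `C(β) = ∑ j, ρ (β j)`, then for any
`λ > ‖gβ‖_∞` the point `(0, τ̂)` is a local minimizer of `(β, τ) ↦ L(β, τ) + λ C(β)`. -/
theorem stmt0 {p k : ℕ}
    (L : (Fin p → ℝ) × (Fin k → ℝ) → ℝ) (τhat : Fin k → ℝ)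
    (gβ : Fin p → ℝ)
    (Q : ((Fin p → ℝ) × (Fin k → ℝ)) →ₗ[ℝ] ((Fin p → ℝ) × (Fin k → ℝ)) →ₗ[ℝ] ℝ)
    -- second-order Taylor expansion at (0, τ̂), with zero gradient in τ:
    (hTaylor :
      (fun v : (Fin p → ℝ) × (Fin k → ℝ) =>
          L (v.1, τhat + v.2) - L (0, τhat) - (∑ j, v.1 j * gβ j) - (1/2) * Q v v)
        =o[nhds 0] fun v => ‖v‖ ^ 2)
    -- the τ–τ block of the Hessian is positive definite:
    (hQpos : ∀ u : Fin k → ℝ, u ≠ 0 →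
      0 < Q ((0 : Fin p → ℝ), u) ((0 : Fin p → ℝ), u))
    -- C is a first-order ℓ1-equivalent complexity penalty:
    (ρ : ℝ → ℝ)
    (hρ_nonneg : ∀ t, 0 ≤ ρ t)
    (hρ_even : ∀ t, ρ (-t) = ρ t)
    (hρ_mono : MonotoneOn ρ (Set.Ici (0 : ℝ)))
    (hρ_ℓ1 : (fun t => ρ t - |t|) =o[nhds (0 : ℝ)] fun t => |t|)
    (lam : ℝ)
    (hlam : ‖gβ‖ < lam) :
    IsLocalMin (fun v : (Fin p → ℝ) × (Fin k → ℝ) =>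
      L v + lam * ∑ j, ρ (v.1 j)) (0, τhat) := by
  obtain ⟨c, hc, hcQ⟩ := aux_posdef Q hQpos
  obtain ⟨M, hM, hMQ⟩ := aux_bound Q
  have hlam0 : (0:ℝ) < lam := (norm_nonneg gβ).trans_lt hlam
  set ε : ℝ := (lam - ‖gβ‖) / (2 * lam) with hεdef
  set δ : ℝ := (lam - ‖gβ‖) / 2 with hδdef
  have hε : 0 < ε := div_pos (by linarith) (by linarith)
  have hδ : 0 < δ := by rw [hδdef]; linarith
  have hεδ : lam * (1 - ε) = ‖gβ‖ + δ := by
    rw [hεdef, hδdef]; field_simp; ring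
  -- the penalty lower bound near 0
  obtain ⟨r₀, hr₀, hρb⟩ := Metric.eventually_nhds_iff.mp (hρ_ℓ1.def hε)
  have hρlb : ∀ t : ℝ, |t| < r₀ → (1 - ε) * |t| ≤ ρ t := by
    intro t ht
    have h1 := hρb (y := t) (by simpa [Real.dist_eq] using ht)
    rw [Real.norm_eq_abs, Real.norm_eq_abs, abs_abs] at h1
    have h2 := (abs_le.mp h1).1
    linarith
  have hρ0 : ρ 0 = 0 := by
    have h1 := hρb (y := 0) (by simpa [Real.dist_eq] using hr₀)
    rw [Real.norm_eq_abs, Real.norm_eq_abs, abs_abs] at h1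
    simp only [abs_zero, sub_zero, mul_zero] at h1
    exact le_antisymm (le_trans (le_abs_self _) h1) (hρ_nonneg 0)
  -- the Taylor remainder bound
  obtain ⟨r₁, hr₁, hTb⟩ := Metric.eventually_nhds_iff.mp (hTaylor.def (by positivity : (0:ℝ) < c/8))
  -- the final radius
  set K : ℝ := M / 2 + M ^ 2 / c + c / 8 with hKdef
  have hK : 0 < K := by rw [hKdef]; positivity
  set r : ℝ := min (min r₀ r₁) (δ / K) with hrdef
  have hr : 0 < r := by
    refine lt_min (lt_min hr₀ hr₁) (div_pos hδ hK)
  rw [IsLocalMin, IsMinFilter]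
  filter_upwards [Metric.ball_mem_nhds ((0 : Fin p → ℝ), τhat) hr] with x hx
  set β : Fin p → ℝ := x.1 with hβdef
  set u : Fin k → ℝ := x.2 - τhat with hudef
  set v : (Fin p → ℝ) × (Fin k → ℝ) := (β, u) with hvdef
  have hxv : (v.1, τhat + v.2) = x := by
    rw [hvdef]; ext i
    · rfl
    · simp [hudef]
  have hdx : dist x ((0 : Fin p → ℝ), τhat) = max ‖β‖ ‖u‖ := by
    rw [Prod.dist_eq, dist_eq_norm, dist_eq_norm, hβdef, hudef, sub_zero]
  have hvnorm : ‖v‖ = max ‖β‖ ‖u‖ := by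
    rw [Prod.norm_def]
  have hvr : ‖v‖ < r := by
    rw [hvnorm, ← hdx]; exact hx
  have hβv : ‖β‖ ≤ ‖v‖ := by rw [hvnorm]; exact le_max_left _ _
  have huv : ‖u‖ ≤ ‖v‖ := by rw [hvnorm]; exact le_max_right _ _
  -- Taylor bound at v
  have hTv := hTb (y := v) (by
    rw [dist_eq_norm, sub_zero]
    exact hvr.trans_le ((min_le_left _ _).trans (min_le_right _ _)))
  rw [hxv] at hTv
  rw [Real.norm_eq_abs, Real.norm_eq_abs, abs_of_nonneg (sq_nonneg ‖v‖)] at hTv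
  have hA := (abs_le.mp hTv).1
  -- split the quadratic form
  have hvsplit : v = ((β, 0) : (Fin p → ℝ) × (Fin k → ℝ)) + ((0, u) : (Fin p → ℝ) × (Fin k → ℝ)) := by
    ext i <;> simp [hvdef]
  have hW : Q v v = Q (β, 0) (β, 0) + Q (β, 0) (0, u) + Q (0, u) (β, 0) + Q (0, u) (0, u) := by
    rw [hvsplit]
    simp only [map_add, LinearMap.add_apply]
    ring
  rw [hW] at hA
  have hn1 : ‖((β, 0) : (Fin p → ℝ) × (Fin k → ℝ))‖ = ‖β‖ := by
    rw [Prod.norm_def]; simp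
  have hn2 : ‖((0, u) : (Fin p → ℝ) × (Fin k → ℝ))‖ = ‖u‖ := by
    rw [Prod.norm_def]; simp
  have hQ1 := (abs_le.mp (hMQ (β, 0) (β, 0))).1
  have hQ2 := (abs_le.mp (hMQ (β, 0) (0, u))).1
  have hQ3 := (abs_le.mp (hMQ (0, u) (β, 0))).1
  rw [hn1] at hQ1 hQ2 hQ3
  rw [hn2] at hQ2 hQ3
  have hQ4 := hcQ u
  have hv2 : ‖v‖ ^ 2 ≤ ‖β‖ ^ 2 + ‖u‖ ^ 2 := by
    rw [hvnorm]
    rcases le_total ‖β‖ ‖u‖ with h | h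
    · rw [max_eq_right h]; nlinarith [norm_nonneg β]
    · rw [max_eq_left h]; nlinarith [norm_nonneg u]
  -- the linear term bound
  set T : ℝ := ∑ j, |β j| with hTdef
  have hT0 : 0 ≤ T := Finset.sum_nonneg fun j _ => abs_nonneg _
  have hS : -(‖gβ‖ * T) ≤ ∑ j, β j * gβ j := by
    have h1 : ∀ j ∈ Finset.univ, -(‖gβ‖ * |β j|) ≤ β j * gβ j := by
      intro j _
      have h2 : |β j * gβ j| ≤ ‖gβ‖ * |β j| := by
        rw [abs_mul]
        calc |β j| * |gβ j| ≤ |β j| * ‖gβ‖ :=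
              mul_le_mul_of_nonneg_left
                (by rw [← Real.norm_eq_abs]; exact norm_le_pi_norm gβ j) (abs_nonneg _)
          _ = ‖gβ‖ * |β j| := by ring
      linarith [(abs_le.mp h2).1]
    have h3 := Finset.sum_le_sum h1
    rw [Finset.sum_neg_distrib, ← Finset.mul_sum] at h3
    rw [hTdef]
    exact h3
  -- penalty lower bound
  have hTa : ‖β‖ ≤ T := by
    rcases eq_or_lt_of_le hT0 with h | h
    · have hβ0 : ∀ j, β j = 0 := by
        intro j
        by_contra hj
        have := Finset.sum_pos' (fun i _ => abs_nonneg (β i))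
          ⟨j, Finset.mem_univ j, abs_pos.mpr hj⟩
        rw [← hTdef] at this; linarith
      have : β = 0 := funext hβ0
      rw [this, norm_zero]; exact hT0
    · rw [pi_norm_le_iff_of_nonneg hT0]
      intro i
      rw [Real.norm_eq_abs]
      exact Finset.single_le_sum (fun j _ => abs_nonneg (β j)) (Finset.mem_univ i)
  have hpen : (1 - ε) * T ≤ ∑ j, ρ (β j) := by
    rw [hTdef, Finset.mul_sum]
    refine Finset.sum_le_sum fun j _ => ?_
    refine hρlb (β j) ?_
    calc |β j| ≤ ‖β‖ := by rw [← Real.norm_eq_abs]; exact norm_le_pi_norm β j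
      _ ≤ ‖v‖ := hβv
      _ < r := hvr
      _ ≤ r₀ := (min_le_left _ _).trans (min_le_left _ _)
  have hpen2 : (‖gβ‖ + δ) * T ≤ lam * ∑ j, ρ (β j) := by
    calc (‖gβ‖ + δ) * T = lam * ((1 - ε) * T) := by rw [← hεδ]; ring
      _ ≤ lam * ∑ j, ρ (β j) := mul_le_mul_of_nonneg_left hpen hlam0.le
  -- cross-term and small-β estimates
  have hJ : M * (‖β‖ * ‖u‖) ≤ c / 4 * ‖u‖ ^ 2 + M ^ 2 / c * ‖β‖ ^ 2 := by
    rw [← sub_nonneg]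
    have heq : c / 4 * ‖u‖ ^ 2 + M ^ 2 / c * ‖β‖ ^ 2 - M * (‖β‖ * ‖u‖)
        = (c * ‖u‖ - 2 * M * ‖β‖) ^ 2 / (4 * c) := by
      field_simp; ring
    rw [heq]; positivity
  have hKa : K * ‖β‖ ≤ δ := by
    have h1 : ‖β‖ ≤ δ / K := hβv.trans (hvr.le.trans (min_le_right _ _))
    calc K * ‖β‖ ≤ K * (δ / K) := mul_le_mul_of_nonneg_left h1 hK.le
      _ = δ := by field_simp
  have hKa2 : M / 2 * ‖β‖ ^ 2 + M ^ 2 / c * ‖β‖ ^ 2 + c / 8 * ‖β‖ ^ 2 ≤ δ * ‖β‖ := by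
    have h1 : K * ‖β‖ * ‖β‖ ≤ δ * ‖β‖ :=
      mul_le_mul_of_nonneg_right hKa (norm_nonneg β)
    calc M / 2 * ‖β‖ ^ 2 + M ^ 2 / c * ‖β‖ ^ 2 + c / 8 * ‖β‖ ^ 2
        = K * ‖β‖ * ‖β‖ := by rw [hKdef]; ring
      _ ≤ δ * ‖β‖ := h1
  have hcv : c / 8 * ‖v‖ ^ 2 ≤ c / 8 * (‖β‖ ^ 2 + ‖u‖ ^ 2) :=
    mul_le_mul_of_nonneg_left hv2 (by positivity)
  have hδT : δ * ‖β‖ ≤ δ * T := mul_le_mul_of_nonneg_left hTa hδ.le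
  have hgT : ‖gβ‖ * T = T * ‖gβ‖ := by ring
  -- conclude
  simp only [hvdef] at hA
  simp only [Pi.zero_apply, hρ0, Finset.sum_const_zero, mul_zero, add_zero]
  linarith only [hA, hcv, hS, hpen2, hδT, hQ1, hQ2, hQ3, hQ4, hJ, hKa2,
    mul_nonneg hc.le (sq_nonneg ‖u‖)]
end

section
/- Let X be an n × p real matrix, S ≥ 1 an integer, and y ∈ ℝ^n such that RSS_s(y) > 0 for all s ∈ {0, 1, …, S}, where RSS_s(y) = inf { ‖y − β₀ 1 − X β‖₂² : β₀ ∈ ℝ, β ∈ ℝ^p, ‖β‖₀ = s } and ‖β‖₀ denotes the number of nonzero entries of β. Then for every a ≠ 0 and b ∈ ℝ, the BIC zero-threshold statistic Λ(y) = max_{1 ≤ s ≤ S} (1/s) log(RSS_0(y) / RSS_s(y)) satisfies Λ(a y + b 1) = Λ(y). -/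
open scoped Classical

/-- Best residual sum of squares over all models with intercept and exactly `s`
active predictors: `RSS_s(y) = inf { ‖y − β₀ 1 − X β‖₂² : ‖β‖₀ = s }`. -/
noncomputable def RSS {n p : ℕ} (X : Matrix (Fin n) (Fin p) ℝ) (s : ℕ)
    (y : Fin n → ℝ) : ℝ :=
  sInf { r : ℝ | ∃ (β₀ : ℝ) (β : Fin p → ℝ),
    (Finset.univ.filter fun j => β j ≠ 0).card = s ∧
    r = ∑ i, (y i - β₀ - ∑ j, X i j * β j) ^ 2 }

lemma rss_scale {n p : ℕ} (X : Matrix (Fin n) (Fin p) ℝ) (s : ℕ)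
    (y : Fin n → ℝ) (a b : ℝ) (ha : a ≠ 0) :
    RSS X s (fun i => a * y i + b) = a ^ 2 * RSS X s y := by
  unfold RSS
  rw [← smul_eq_mul, ← Real.sInf_smul_of_nonneg (sq_nonneg a)]
  congr 1
  ext r
  constructor
  · rintro ⟨β₀, β, hcard, rfl⟩
    refine ⟨∑ i, (y i - (β₀ - b)/a - ∑ j, X i j * (β j / a)) ^ 2,
      ⟨(β₀ - b)/a, fun j => β j / a, ?_, rfl⟩, ?_⟩
    · rw [← hcard]; congr 1; ext j; simp [div_ne_zero_iff, ha]
    · simp only [smul_eq_mul, Finset.mul_sum]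
      congr 1; ext i
      rw [show (∑ j, X i j * (β j / a)) = (∑ j, X i j * β j)/a by
        rw [Finset.sum_div]; congr 1; ext j; ring]
      field_simp
      ring
  · rintro ⟨t, ⟨β₀, β, hcard, rfl⟩, rfl⟩
    refine ⟨a * β₀ + b, fun j => a * β j, ?_, ?_⟩
    · rw [← hcard]; congr 1; ext j; simp [mul_ne_zero_iff, ha]
    · simp only [smul_eq_mul, Finset.mul_sum]
      congr 1; ext i
      rw [show (∑ j, X i j * (a * β j)) = a * ∑ j, X i j * β j by
        rw [Finset.mul_sum]; congr 1; ext j; ring]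
      ring

/-- Finite-sample pivotality of BIC's zero-thresholding statistic:
if `RSS_s(y) > 0` for all `s ∈ {0, …, S}`, then
`Λ(y) = max_{1 ≤ s ≤ S} (1/s) log(RSS_0(y)/RSS_s(y))` is invariant under
`y ↦ a y + b 1` for every `a ≠ 0` and `b ∈ ℝ`. -/
theorem stmt9 {n p : ℕ} (X : Matrix (Fin n) (Fin p) ℝ) (S : ℕ) (hS : 1 ≤ S)
    (y : Fin n → ℝ) (hRSS : ∀ s ≤ S, 0 < RSS X s y)
    (hne : (Finset.Icc 1 S).Nonempty)
    (a b : ℝ) (ha : a ≠ 0) :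
    (Finset.Icc 1 S).sup' hne
        (fun s => (1 / (s : ℝ)) *
          Real.log (RSS X 0 (fun i => a * y i + b) / RSS X s (fun i => a * y i + b)))
      = (Finset.Icc 1 S).sup' hne
          (fun s => (1 / (s : ℝ)) * Real.log (RSS X 0 y / RSS X s y)) := by
  apply Finset.sup'_congr hne rfl
  intro s hs
  rw [rss_scale X 0 y a b ha, rss_scale X s y a b ha,
    mul_div_mul_left _ _ (pow_ne_zero 2 ha)]
end

section
/- Let X be an n × p real matrix, y ∈ ℝ^n, ȳ = (1/n) Σ_{i=1}^n y_i, and λ ≥ 0. Then (β₀, β) = (ȳ, 0) is a global minimizer over ℝ × ℝ^p of the LASSO objective (β₀, β) ↦ (1/2) ‖y − β₀ 1 − X β‖₂² + λ ‖β‖₁ if and only if λ ≥ ‖Xᵀ(y − ȳ 1)‖_∞. -/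
/-- Zero-thresholding function of LASSO with intercept:
`(β₀, β) = (ȳ, 0)` globally minimizes
`(β₀, β) ↦ (1/2) ‖y − β₀ 1 − X β‖₂² + λ ‖β‖₁` iff `λ ≥ ‖Xᵀ(y − ȳ 1)‖_∞`. -/
theorem stmt12 {n p : ℕ} (X : Matrix (Fin n) (Fin p) ℝ) (y : Fin n → ℝ)
    (lam : ℝ) (hlam : 0 ≤ lam)
    (ybar : ℝ) (hybar : ybar = (1 / (n : ℝ)) * ∑ i, y i) :
    (∀ (β₀ : ℝ) (β : Fin p → ℝ),
        (1 / 2) * (∑ i, (y i - ybar - ∑ j, X i j * (0 : ℝ)) ^ 2)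
            + lam * ∑ j : Fin p, |(0 : ℝ)|
          ≤ (1 / 2) * (∑ i, (y i - β₀ - ∑ j, X i j * β j) ^ 2)
            + lam * ∑ j, |β j|) ↔
      ‖(fun j => ∑ i, X i j * (y i - ybar) : Fin p → ℝ)‖ ≤ lam := by
  have hSa : ∑ i, (y i - ybar) = 0 := by
    rw [Finset.sum_sub_distrib, Finset.sum_const, Finset.card_univ, Fintype.card_fin]
    rcases Nat.eq_zero_or_pos n with h0 | h0
    · subst h0; simp
    · rw [hybar]
      have : (n : ℝ) ≠ 0 := Nat.cast_ne_zero.mpr h0.ne'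
      rw [nsmul_eq_mul, ← mul_assoc, mul_one_div_cancel this, one_mul, sub_self]
  rw [pi_norm_le_iff_of_nonneg hlam]
  constructor
  · intro h j
    rw [Real.norm_eq_abs]
    set c := ∑ i, X i j * (y i - ybar) with hc
    set S := ∑ i, (X i j) ^ 2 with hS
    have hS0 : 0 ≤ S := Finset.sum_nonneg fun i _ => sq_nonneg _
    have hstep : ∀ t : ℝ, t * c ≤ t ^ 2 * S / 2 + lam * |t| := by
      intro t
      have h1 := h ybar (fun j' => if j' = j then t else 0)
      simp only [mul_ite, mul_zero, Finset.sum_ite_eq', Finset.mem_univ, if_true,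
        abs_zero, Finset.sum_const, smul_zero, apply_ite abs] at h1
      have expand : (∑ i, (y i - ybar - X i j * t) ^ 2)
          = (∑ i, (y i - ybar) ^ 2) - 2 * t * c + t ^ 2 * S := by
        rw [hc, hS, Finset.mul_sum, Finset.mul_sum, ← Finset.sum_sub_distrib,
          ← Finset.sum_add_distrib]
        exact Finset.sum_congr rfl fun i _ => by ring
      rw [expand] at h1
      simp only [sub_zero] at h1
      linarith
    refine le_of_forall_pos_le_add fun δ hδ => ?_
    have hε : (0 : ℝ) < 2 * δ / (S + 1) := by positivity
    have h1 := hstep (2 * δ / (S + 1)) 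
    have h2 := hstep (-(2 * δ / (S + 1)))
    have habs : |2 * δ / (S + 1)| = 2 * δ / (S + 1) := abs_of_pos hε
    rw [abs_neg, habs] at h2
    rw [habs] at h1
    have key : (2 * δ / (S + 1)) * |c| ≤ (2 * δ / (S + 1)) ^ 2 * S / 2 + lam * (2 * δ / (S + 1)) := by
      rcases abs_cases c with ⟨hc1, _⟩ | ⟨hc1, _⟩
      · rw [hc1]; exact h1
      · rw [hc1]
        have e : 2 * δ / (S + 1) * -c = -(2 * δ / (S + 1)) * c := by ring
        have e2 : (-(2 * δ / (S + 1))) ^ 2 = (2 * δ / (S + 1)) ^ 2 := by ring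
        rw [e2] at h2
        rw [e]
        exact h2
    have hSp : (0:ℝ) < S + 1 := by linarith
    have hdiv : (2 * δ / (S + 1)) ^ 2 * S / 2 ≤ (2 * δ / (S + 1)) * δ := by
      have : (2 * δ / (S + 1)) * S / 2 ≤ δ := by
        rw [div_mul_eq_mul_div, div_div, div_le_iff₀ (by positivity : (0:ℝ) < (S+1)*2)]
        nlinarith [hδ.le, hS0]
      nlinarith [hε]
    have := le_trans key (by linarith : (2 * δ / (S + 1)) ^ 2 * S / 2 + lam * (2 * δ / (S + 1)) ≤ (2 * δ / (S + 1)) * (δ + lam))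
    have := (mul_le_mul_iff_right₀ hε).mp this
    linarith
  · intro hn β₀ β
    simp only [mul_zero, Finset.sum_const, smul_zero, abs_zero, mul_zero, add_zero] at *
    set b := β₀ - ybar with hb
    have expand : (∑ i, (y i - β₀ - ∑ j, X i j * β j) ^ 2)
        = (∑ i, (y i - ybar) ^ 2)
          - 2 * (∑ i, (y i - ybar) * (b + ∑ j, X i j * β j))
          + (∑ i, (b + ∑ j, X i j * β j) ^ 2) := by
      rw [Finset.mul_sum, ← Finset.sum_sub_distrib, ← Finset.sum_add_distrib]
      exact Finset.sum_congr rfl fun i _ => by rw [hb]; ring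
    have hcross : (∑ i, (y i - ybar) * (b + ∑ j, X i j * β j))
        = ∑ j, β j * (∑ i, X i j * (y i - ybar)) := by
      have e1 : ∀ i, (y i - ybar) * (b + ∑ j, X i j * β j)
          = (y i - ybar) * b + ∑ j, β j * (X i j * (y i - ybar)) := by
        intro i
        rw [mul_add, Finset.mul_sum]
        congr 1
        exact Finset.sum_congr rfl fun jj _ => by ring
      simp only [e1]
      rw [Finset.sum_add_distrib, ← Finset.sum_mul, hSa, zero_mul, zero_add,
        Finset.sum_comm]
      exact Finset.sum_congr rfl fun jj _ => by rw [Finset.mul_sum]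
    have hbound : (∑ j, β j * (∑ i, X i j * (y i - ybar))) ≤ lam * ∑ j, |β j| := by
      rw [Finset.mul_sum]
      refine Finset.sum_le_sum fun jj _ => ?_
      calc β jj * (∑ i, X i jj * (y i - ybar))
          ≤ |β jj * (∑ i, X i jj * (y i - ybar))| := le_abs_self _
        _ = |β jj| * |∑ i, X i jj * (y i - ybar)| := abs_mul _ _
        _ ≤ |β jj| * lam := by
            refine mul_le_mul_of_nonneg_left ?_ (abs_nonneg _)
            have := hn jj
            rwa [Real.norm_eq_abs] at this
        _ = lam * |β jj| := mul_comm _ _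
    have hU : 0 ≤ ∑ i, (b + ∑ j, X i j * β j) ^ 2 :=
      Finset.sum_nonneg fun i _ => sq_nonneg _
    rw [expand, hcross]
    simp only [sub_zero]
    linarith
end

section
/- Let X be an n × p real matrix, y ∈ ℝ^n with y ≠ ȳ 1 where ȳ = (1/n) Σ_{i=1}^n y_i, and λ ≥ 0. Then (β₀, β) = (ȳ, 0) is a global minimizer over ℝ × ℝ^p of the square-root LASSO objective (β₀, β) ↦ ‖y − β₀ 1 − X β‖₂ + λ ‖β‖₁ if and only if λ ≥ ‖Xᵀ(y − ȳ 1)‖_∞ / ‖y − ȳ 1‖₂. -/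
set_option maxHeartbeats 1000000


/-- Zero-thresholding function of square-root LASSO with intercept:
if `y ≠ ȳ 1`, then `(β₀, β) = (ȳ, 0)` globally minimizes
`(β₀, β) ↦ ‖y − β₀ 1 − X β‖₂ + λ ‖β‖₁` iff
`λ ≥ ‖Xᵀ(y − ȳ 1)‖_∞ / ‖y − ȳ 1‖₂`. -/
theorem stmt13 {n p : ℕ} (X : Matrix (Fin n) (Fin p) ℝ) (y : Fin n → ℝ)
    (lam : ℝ) (hlam : 0 ≤ lam)
    (ybar : ℝ) (hybar : ybar = (1 / (n : ℝ)) * ∑ i, y i)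
    (hy : ∃ i, y i ≠ ybar) :
    (∀ (β₀ : ℝ) (β : Fin p → ℝ),
        Real.sqrt (∑ i, (y i - ybar - ∑ j, X i j * (0 : ℝ)) ^ 2)
            + lam * ∑ j : Fin p, |(0 : ℝ)|
          ≤ Real.sqrt (∑ i, (y i - β₀ - ∑ j, X i j * β j) ^ 2)
            + lam * ∑ j, |β j|) ↔
      ‖(fun j => ∑ i, X i j * (y i - ybar) : Fin p → ℝ)‖
          / Real.sqrt (∑ i, (y i - ybar) ^ 2) ≤ lam := by
  obtain ⟨i0, hi0⟩ := hy
  have hn : (0:ℝ) < n := by exact_mod_cast (Fin.pos i0)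
  set r : Fin n → ℝ := fun i => y i - ybar with hr
  have hsum_r : ∑ i, r i = 0 := by
    have : ∑ i, r i = (∑ i, y i) - n * ybar := by
      simp [hr, Finset.sum_sub_distrib, mul_comm]
    rw [this, hybar]; field_simp; ring
  have hs2pos : 0 < ∑ i, r i ^ 2 := by
    refine Finset.sum_pos' (fun i _ => sq_nonneg _) ⟨i0, Finset.mem_univ _, ?_⟩
    have : r i0 ≠ 0 := sub_ne_zero_of_ne hi0
    positivity
  set a := Real.sqrt (∑ i, r i ^ 2) with ha
  have hapos : 0 < a := Real.sqrt_pos.2 hs2pos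
  set c : Fin p → ℝ := fun j => ∑ i, X i j * r i with hc
  have hlhs : Real.sqrt (∑ i, (y i - ybar - ∑ j, X i j * (0 : ℝ)) ^ 2)
      + lam * ∑ j : Fin p, |(0 : ℝ)| = a := by
    simp [ha, hr]
  rw [div_le_iff₀ hapos]
  constructor
  · intro H
    rw [show ‖c‖ = ‖c‖ from rfl]
    by_contra hcon
    push_neg at hcon
    -- there is j with |c j| > lam * a
    obtain ⟨j, hj⟩ : ∃ j, lam * a < |c j| := by
      by_contra h
      push_neg at h
      exact absurd (pi_norm_le_iff_of_nonneg (by positivity) |>.2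
        (fun j => by simpa using h j)) (not_le.2 hcon)
    set b := |c j| with hb
    have hba : 0 < b - lam * a := sub_pos.2 hj
    set s : ℝ := if 0 ≤ c j then 1 else -1 with hs
    have hsc : s * c j = b := by
      rcases le_or_gt 0 (c j) with h | h
      · simp [hs, h, hb, abs_of_nonneg h]
      · simp [hs, not_le.2 h, hb, abs_of_neg h]
    have hsabs : |s| = 1 := by
      rcases le_or_gt 0 (c j) with h | h
      · simp [hs, h]
      · simp [hs, not_le.2 h]
    have hs2 : s ^ 2 = 1 := by
      rcases le_or_gt 0 (c j) with h | h
      · simp [hs, h]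
      · simp [hs, not_le.2 h]
    set d := ∑ i, X i j ^ 2 with hd
    set t := min ((b - lam * a) / (|d - lam ^ 2| + 1)) (a / (lam + 1)) with ht
    have htpos : 0 < t := lt_min (by positivity) (by positivity)
    set β : Fin p → ℝ := fun k => if k = j then t * s else 0 with hβ
    have hsumβ : ∑ k, |β k| = t := by
      rw [Finset.sum_eq_single j]
      · simp [hβ, abs_mul, hsabs, abs_of_pos htpos]
      · intro k _ hk; simp [hβ, hk]
      · simp
    have hXβ : ∀ i, ∑ k, X i k * β k = t * s * X i j := by
      intro i
      rw [Finset.sum_eq_single j]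
      · simp [hβ]; ring
      · intro k _ hk; simp [hβ, hk]
      · simp
    have key := H ybar β
    rw [hlhs, hsumβ] at key
    have hQ : ∑ i, (y i - ybar - ∑ k, X i k * β k) ^ 2
        = a ^ 2 - 2 * t * b + t ^ 2 * d := by
      have : ∀ i, (y i - ybar - ∑ k, X i k * β k) ^ 2
          = r i ^ 2 - 2 * t * (s * (X i j * r i)) + t ^ 2 * X i j ^ 2 := by
        intro i
        rw [hXβ i]
        simp only [hr]
        linear_combination t ^ 2 * X i j ^ 2 * hs2
      rw [Finset.sum_congr rfl (fun i _ => this i)]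
      rw [Real.sq_sqrt hs2pos.le]
      simp only [Finset.sum_add_distrib, Finset.sum_sub_distrib, ← Finset.mul_sum]
      rw [← hsc, hc]
    -- show sqrt Q < a - lam * t, contradiction
    have hlt1 : lam * t < a := by
      have h1 : t ≤ a / (lam + 1) := min_le_right _ _
      have h1' : t * (lam + 1) ≤ a := (le_div_iff₀ (by positivity)).1 h1
      nlinarith
    have hQlt : a ^ 2 - 2 * t * b + t ^ 2 * d < (a - lam * t) ^ 2 := by
      -- reduces to t * (d - lam^2) < 2 * (b - lam * a)
      have h1 : t ≤ (b - lam * a) / (|d - lam ^ 2| + 1) := min_le_left _ _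
      have h2 : t * (d - lam ^ 2) < 2 * (b - lam * a) := by
        have hT : (b - lam * a) / (|d - lam ^ 2| + 1) * (|d - lam ^ 2| + 1) = b - lam * a :=
          div_mul_cancel₀ _ (by positivity)
        have step : t * (|d - lam ^ 2| + 1) ≤ b - lam * a := by
          rw [← hT]
          exact mul_le_mul_of_nonneg_right h1 (by positivity)
        have h3 : t * (d - lam ^ 2) ≤ t * |d - lam ^ 2| :=
          mul_le_mul_of_nonneg_left (le_abs_self _) htpos.le
        nlinarith
      nlinarith [mul_lt_mul_of_pos_left h2 htpos]
    have hsqrtlt : Real.sqrt (∑ i, (y i - ybar - ∑ k, X i k * β k) ^ 2) < a - lam * t := by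
      rw [hQ, Real.sqrt_lt' (by linarith)]
      exact hQlt
    linarith
  · intro hnorm β₀ β
    rw [hlhs]
    set v : Fin n → ℝ := fun i => y i - β₀ - ∑ j, X i j * β j with hv
    have hcs : ∑ i, v i * r i ≤ Real.sqrt (∑ i, v i ^ 2) * a := by
      simpa [ha] using Real.sum_mul_le_sqrt_mul_sqrt Finset.univ v r
    have hvr : ∑ i, v i * r i = (∑ i, r i ^ 2) - ∑ j, β j * c j := by
      have key : ∀ i, v i * r i = r i ^ 2 + (ybar - β₀) * r i - ∑ j, X i j * β j * r i := by
        intro i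
        rw [← Finset.sum_mul]
        simp only [hv, hr]
        ring
      rw [Finset.sum_congr rfl fun i _ => key i]
      rw [Finset.sum_sub_distrib, Finset.sum_add_distrib, ← Finset.mul_sum, hsum_r,
        Finset.sum_comm]
      simp only [mul_zero, add_zero, hc]
      congr 1
      refine Finset.sum_congr rfl fun j _ => ?_
      rw [Finset.mul_sum]
      exact Finset.sum_congr rfl fun i _ => by ring
    have hbound : ∑ j, β j * c j ≤ (∑ j, |β j|) * (lam * a) := by
      calc ∑ j, β j * c j ≤ ∑ j, |β j| * ‖c‖ := by
            refine Finset.sum_le_sum fun j _ => ?_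
            calc β j * c j ≤ |β j * c j| := le_abs_self _
              _ = |β j| * |c j| := abs_mul _ _
              _ ≤ |β j| * ‖c‖ := by
                  have := norm_le_pi_norm c j
                  have h2 : |c j| ≤ ‖c‖ := by simpa using this
                  nlinarith [abs_nonneg (β j)]
        _ = (∑ j, |β j|) * ‖c‖ := by rw [Finset.sum_mul]
        _ ≤ (∑ j, |β j|) * (lam * a) := by
            have hβnn : 0 ≤ ∑ j, |β j| := Finset.sum_nonneg fun j _ => abs_nonneg _
            nlinarith
    have ha2 : a ^ 2 = ∑ i, r i ^ 2 := Real.sq_sqrt hs2pos.le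
    have hfinal : a * a - (∑ j, |β j|) * (lam * a) ≤ Real.sqrt (∑ i, v i ^ 2) * a := by
      calc a * a - (∑ j, |β j|) * (lam * a) ≤ ∑ i, v i * r i := by
            rw [hvr]; nlinarith [ha2]
        _ ≤ _ := hcs
    nlinarith [hfinal, hapos, Real.sqrt_nonneg (∑ i, v i ^ 2)]
end
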